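/- arXiv:2511.22487 — 5 statements merged into one kernel-verified Lean document; each statement's English description precedes it below -/
import Mathlib

section
/- If A and B are positive semidefinite matrices, then AB and BA have the same range if and only if A commutes with the projection onto the support of B and B commutes with the projection onto the support of A. -/
open scoped ComplexOrder

/-- The range (support) of a matrix, i.e. the orthogonal complement of its kernel. -/
noncomputable def msupp {n : Type*} [Fintype n] [DecidableEq n] (X : Matrix n n ℂ) :
    Submodule ℂ (EuclideanSpace ℂ n) :=
  (LinearMap.ker (Matrix.toEuclideanLin X))ᗮ

lemma toEuc_mul {n : Type*} [Fintype n] [DecidableEq n]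
    (X Y : Matrix n n ℂ) (v : EuclideanSpace ℂ n) :
    Matrix.toEuclideanLin (X * Y) v = Matrix.toEuclideanLin X (Matrix.toEuclideanLin Y v) := by
  simp [Matrix.toEuclideanLin_apply, Matrix.mulVec_mulVec]

/-- A symmetric operator commutes with a symmetric idempotent whose kernel it preserves. -/
lemma comm_lemma {E : Type*} [NormedAddCommGroup E] [InnerProductSpace ℂ E]
    (a q : E →ₗ[ℂ] E) (ha : a.IsSymmetric) (hq : q.IsSymmetric)
    (hq2 : ∀ x, q (q x) = q x) (hinv : ∀ x, q x = 0 → q (a x) = 0) :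
    ∀ x, a (q x) = q (a x) := by
  have hstar : ∀ x, q (a x) = q (a (q x)) := by
    intro x
    have h0 : q (x - q x) = 0 := by simp [map_sub, hq2]
    have h1 := hinv _ h0
    rw [map_sub, map_sub] at h1
    exact (sub_eq_zero.mp h1)
  intro x
  set z := a (q x) - q (a (q x)) with hz
  have hqz : q z = 0 := by simp [hz, map_sub, hq2]
  have h2 : inner (𝕜 := ℂ) z (a (q x)) = 0 := by
    rw [← ha z (q x), ← hq (a z) x, hinv z hqz]
    simp
  have h3 : inner (𝕜 := ℂ) z (q (a (q x))) = 0 := by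
    rw [← hq z (a (q x)), hqz]
    simp
  have h4 : inner (𝕜 := ℂ) z z = 0 := by
    rw [hz, inner_sub_right, ← hz, h2, h3, sub_zero]
  have : z = 0 := inner_self_eq_zero.mp h4
  have := sub_eq_zero.mp this
  rw [this, ← hstar]

/-- A symmetric idempotent whose range is the orthocomplement of the kernel of `t`
has the same kernel as `t`. -/
lemma ker_proj {E : Type*} [NormedAddCommGroup E] [InnerProductSpace ℂ E]
    [FiniteDimensional ℂ E]
    (p t : E →ₗ[ℂ] E) (hp : p.IsSymmetric)
    (hr : LinearMap.range p = (LinearMap.ker t)ᗮ) :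
    ∀ x, p x = 0 ↔ t x = 0 := by
  have hker : LinearMap.ker p = (LinearMap.range p)ᗮ := by
    ext x
    simp only [LinearMap.mem_ker, Submodule.mem_orthogonal]
    constructor
    · intro h u hu
      obtain ⟨y, rfl⟩ := hu
      rw [hp y x, h, inner_zero_right]
    · intro h
      have := h (p (p x)) ⟨p x, rfl⟩
      rw [hp (p x) x] at this
      exact inner_self_eq_zero.mp this
  intro x
  have : LinearMap.ker p = LinearMap.ker t := by
    rw [hker, hr, Submodule.orthogonal_orthogonal]
  constructor
  · intro h
    exact (LinearMap.mem_ker.mp (this ▸ LinearMap.mem_ker.mpr h))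
  · intro h
    exact (LinearMap.mem_ker.mp (this.symm ▸ LinearMap.mem_ker.mpr h))

/-- AB and BA have the same support iff A commutes with Π_B and B commutes with Π_A. -/
theorem supp_mul_eq_supp_mul_iff_commute
    {n : Type*} [Fintype n] [DecidableEq n]
    (A B PiA PiB : Matrix n n ℂ) (hA : A.PosSemidef) (hB : B.PosSemidef)
    (hAherm : PiA.IsHermitian) (hAidem : PiA * PiA = PiA)
    (hArange : LinearMap.range (Matrix.toEuclideanLin PiA) = msupp A)
    (hBherm : PiB.IsHermitian) (hBidem : PiB * PiB = PiB)
    (hBrange : LinearMap.range (Matrix.toEuclideanLin PiB) = msupp B) :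
    msupp (A * B) = msupp (B * A) ↔ (A * PiB = PiB * A ∧ B * PiA = PiA * B) := by
  set a := Matrix.toEuclideanLin A with ha_def
  set b := Matrix.toEuclideanLin B with hb_def
  set p := Matrix.toEuclideanLin PiA with hp_def
  set q := Matrix.toEuclideanLin PiB with hq_def
  have hasym : a.IsSymmetric := Matrix.isHermitian_iff_isSymmetric.mp hA.1
  have hbsym : b.IsSymmetric := Matrix.isHermitian_iff_isSymmetric.mp hB.1
  have hpsym : p.IsSymmetric := Matrix.isHermitian_iff_isSymmetric.mp hAherm
  have hqsym : q.IsSymmetric := Matrix.isHermitian_iff_isSymmetric.mp hBherm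
  have hp2 : ∀ x, p (p x) = p x := fun x => by
    rw [hp_def, ← toEuc_mul, hAidem]
  have hq2 : ∀ x, q (q x) = q x := fun x => by
    rw [hq_def, ← toEuc_mul, hBidem]
  have kA : ∀ x, p x = 0 ↔ a x = 0 := ker_proj p a hpsym hArange
  have kB : ∀ x, q x = 0 ↔ b x = 0 := ker_proj q b hqsym hBrange
  -- reduce the support equality to kernel equality
  have horth : msupp (A * B) = msupp (B * A) ↔
      (∀ x, a (b x) = 0 ↔ b (a x) = 0) := by
    have h1 : msupp (A * B) = msupp (B * A) ↔
        LinearMap.ker (Matrix.toEuclideanLin (A * B)) =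
        LinearMap.ker (Matrix.toEuclideanLin (B * A)) := by
      unfold msupp
      constructor
      · intro h
        have := congrArg (fun K : Submodule ℂ (EuclideanSpace ℂ n) => Kᗮ) h
        simpa [Submodule.orthogonal_orthogonal] using this
      · intro h; rw [h]
    rw [h1, Submodule.ext_iff]
    constructor
    · intro h x
      have := h x
      simp only [LinearMap.mem_ker, toEuc_mul] at this
      exact this
    · intro h x
      simp only [LinearMap.mem_ker, toEuc_mul]
      exact h x
  rw [horth]
  constructor
  · intro hker
    constructor
    · -- A * PiB = PiB * A
      apply Matrix.toEuclideanLin.injective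
      apply LinearMap.ext
      intro x
      rw [toEuc_mul, toEuc_mul]
      exact comm_lemma a q hasym hqsym hq2
        (fun x hx => (kB _).mpr ((hker x).mp (by rw [(kB x).mp hx, map_zero]))) x
    · -- B * PiA = PiA * B
      apply Matrix.toEuclideanLin.injective
      apply LinearMap.ext
      intro x
      rw [toEuc_mul, toEuc_mul]
      exact comm_lemma b p hbsym hpsym hp2
        (fun x hx => (kA _).mpr ((hker x).mpr (by rw [(kA x).mp hx, map_zero]))) x
  · rintro ⟨hc1m, hc2m⟩
    have hc1 : ∀ x, a (q x) = q (a x) := fun x => by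
      have := congrFun (congrArg DFunLike.coe (congrArg Matrix.toEuclideanLin hc1m)) x
      simpa [toEuc_mul] using this
    have hc2 : ∀ x, b (p x) = p (b x) := fun x => by
      have := congrFun (congrArg DFunLike.coe (congrArg Matrix.toEuclideanLin hc2m)) x
      simpa [toEuc_mul] using this
    -- the two projections commute
    have hpq : ∀ x, q (p x) = p (q x) :=
      comm_lemma q p hqsym hpsym hp2
        (fun x hx => (kA _).mpr (by rw [hc1 x, (kA x).mp hx, map_zero]))
    intro x
    constructor
    · intro h
      -- a (b x) = 0 ⟹ b (a x) = 0
      have s1 : p (b x) = 0 := (kA _).mpr h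
      have s2 : b (p x) = 0 := by rw [hc2]; exact s1
      have s3 : q (p x) = 0 := (kB _).mpr s2
      have s4 : p (q x) = 0 := by rw [← hpq]; exact s3
      have s5 : a (q x) = 0 := (kA _).mp s4
      have s6 : q (a x) = 0 := by rw [← hc1]; exact s5
      exact (kB _).mp s6
    · intro h
      have s1 : q (a x) = 0 := (kB _).mpr h
      have s2 : a (q x) = 0 := by rw [hc1]; exact s1
      have s3 : p (q x) = 0 := (kA _).mpr s2
      have s4 : q (p x) = 0 := by rw [hpq]; exact s3
      have s5 : b (p x) = 0 := (kB _).mp s4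
      have s6 : p (b x) = 0 := by rw [← hc2]; exact s5
      exact (kA _).mp s6
end

section
/- For two orthogonal projections P and Q on a finite-dimensional Hilbert space, P and Q commute if and only if supp(PQP) = supp(P) ∩ supp(Q). -/
open scoped ComplexOrder

section Aux

set_option linter.unusedSectionVars false

variable {E : Type*} [NormedAddCommGroup E] [InnerProductSpace ℂ E] [FiniteDimensional ℂ E]

lemma aux_range_adjoint (T : E →ₗ[ℂ] E) :
    LinearMap.range (LinearMap.adjoint T) = (LinearMap.ker T)ᗮ := by
  have h1 : (LinearMap.range (LinearMap.adjoint T))ᗮ = LinearMap.ker T := by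
    ext x
    simp only [Submodule.mem_orthogonal, LinearMap.mem_ker, LinearMap.mem_range,
      forall_exists_index]
    constructor
    · intro h
      have h2 : ∀ y, inner ℂ (y : E) (T x) = (0 : ℂ) := by
        intro y
        have := h _ y rfl
        rwa [LinearMap.adjoint_inner_left] at this
      exact ext_inner_left ℂ (by simpa using h2)
    · intro h u y hy
      subst hy
      rw [LinearMap.adjoint_inner_left, h, inner_zero_right]
  rw [← h1, Submodule.orthogonal_orthogonal]

lemma aux_fix (p : E →ₗ[ℂ] E) (hp2 : p ∘ₗ p = p) {x : E}
    (hx : x ∈ LinearMap.range p) : p x = x := by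
  obtain ⟨y, rfl⟩ := hx
  calc p (p y) = (p ∘ₗ p) y := rfl
  _ = p y := by rw [hp2]

lemma aux_key (p q : E →ₗ[ℂ] E) (hp : LinearMap.adjoint p = p) (hp2 : p ∘ₗ p = p)
    (hq : LinearMap.adjoint q = q) (hq2 : q ∘ₗ q = q) :
    p ∘ₗ q = q ∘ₗ p ↔
      (LinearMap.ker (p ∘ₗ q ∘ₗ p))ᗮ = (LinearMap.ker p)ᗮ ⊓ (LinearMap.ker q)ᗮ := by
  have hker : LinearMap.ker (p ∘ₗ q ∘ₗ p) = LinearMap.ker (q ∘ₗ p) := by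
    ext x
    simp only [LinearMap.mem_ker, LinearMap.comp_apply]
    constructor
    · intro h
      have h0 : inner ℂ (q (p x)) (q (p x)) = (0 : ℂ) := by
        calc inner ℂ (q (p x)) (q (p x)) = inner ℂ (p x) (LinearMap.adjoint q (q (p x))) := by
              rw [LinearMap.adjoint_inner_right]
        _ = inner ℂ (p x) ((q ∘ₗ q) (p x)) := by rw [hq]; rfl
        _ = inner ℂ (p x) (q (p x)) := by rw [hq2]
        _ = inner ℂ x (LinearMap.adjoint p (q (p x))) := by rw [LinearMap.adjoint_inner_right]
        _ = inner ℂ x (p (q (p x))) := by rw [hp]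
        _ = (0 : ℂ) := by rw [h, inner_zero_right]
      exact inner_self_eq_zero.mp h0
    · intro h; rw [h, map_zero]
  have hrr : (LinearMap.ker (p ∘ₗ q ∘ₗ p))ᗮ = LinearMap.range (p ∘ₗ q) := by
    rw [hker, ← aux_range_adjoint, LinearMap.adjoint_comp, hp, hq]
  have hp' : (LinearMap.ker p)ᗮ = LinearMap.range p := by
    rw [← aux_range_adjoint, hp]
  have hq' : (LinearMap.ker q)ᗮ = LinearMap.range q := by
    rw [← aux_range_adjoint, hq]
  rw [hrr, hp', hq']
  constructor
  · intro hcomm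
    apply le_antisymm
    · refine le_inf ?_ ?_
      · rintro _ ⟨y, rfl⟩; exact ⟨q y, rfl⟩
      · rw [hcomm]; rintro _ ⟨y, rfl⟩; exact ⟨p y, rfl⟩
    · rintro x ⟨hxp, hxq⟩
      exact ⟨x, by simp [LinearMap.comp_apply, aux_fix q hq2 hxq, aux_fix p hp2 hxp]⟩
  · intro hr
    have hqpq : q ∘ₗ (p ∘ₗ q) = p ∘ₗ q := by
      ext x
      have hmem : (p ∘ₗ q) x ∈ LinearMap.range q := by
        have : (p ∘ₗ q) x ∈ LinearMap.range (p ∘ₗ q) := ⟨x, rfl⟩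
        rw [hr] at this
        exact this.2
      exact aux_fix q hq2 hmem
    have hadj : LinearMap.adjoint (p ∘ₗ q) = q ∘ₗ p := by
      rw [LinearMap.adjoint_comp, hp, hq]
    calc p ∘ₗ q = q ∘ₗ (p ∘ₗ q) := hqpq.symm
    _ = LinearMap.adjoint (q ∘ₗ (p ∘ₗ q)) := by
        rw [LinearMap.adjoint_comp, hadj, hq, LinearMap.comp_assoc]
    _ = LinearMap.adjoint (p ∘ₗ q) := by rw [hqpq]
    _ = q ∘ₗ p := hadj

end Aux

lemma aux_toEL_mul {n : Type*} [Fintype n] [DecidableEq n] (A B : Matrix n n ℂ) :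
    Matrix.toEuclideanLin (A * B) =
      Matrix.toEuclideanLin A ∘ₗ Matrix.toEuclideanLin B := by
  rw [Matrix.toEuclideanLin_eq_toLin, Matrix.toLin_mul _ (PiLp.basisFun 2 ℂ n) _]

/-- Two orthogonal projections P and Q commute iff supp(PQP) = supp(P) ∩ supp(Q). -/
theorem proj_commute_iff_supp_inf
    {n : Type*} [Fintype n] [DecidableEq n]
    (P Q : Matrix n n ℂ)
    (hPherm : P.IsHermitian) (hPidem : P * P = P)
    (hQherm : Q.IsHermitian) (hQidem : Q * Q = Q) :
    P * Q = Q * P ↔ msupp (P * Q * P) = msupp P ⊓ msupp Q := by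
  set p := Matrix.toEuclideanLin P with hpdef
  set q := Matrix.toEuclideanLin Q with hqdef
  have hp : LinearMap.adjoint p = p := by
    rw [hpdef, ← Matrix.toEuclideanLin_conjTranspose_eq_adjoint, hPherm]
  have hq : LinearMap.adjoint q = q := by
    rw [hqdef, ← Matrix.toEuclideanLin_conjTranspose_eq_adjoint, hQherm]
  have hp2 : p ∘ₗ p = p := by rw [hpdef, ← aux_toEL_mul, hPidem]
  have hq2 : q ∘ₗ q = q := by rw [hqdef, ← aux_toEL_mul, hQidem]
  have hPQP : Matrix.toEuclideanLin (P * Q * P) = p ∘ₗ q ∘ₗ p := by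
    rw [aux_toEL_mul, aux_toEL_mul, LinearMap.comp_assoc]
  have hcomm : P * Q = Q * P ↔ p ∘ₗ q = q ∘ₗ p := by
    rw [← aux_toEL_mul, ← aux_toEL_mul]
    exact ⟨fun h => by rw [h], fun h => Matrix.toEuclideanLin.injective h⟩
  rw [hcomm]
  unfold msupp
  rw [hPQP]
  exact aux_key p q hp hp2 hq hq2
end

section
/- For two orthogonal projections P and Q on a finite-dimensional Hilbert space, P and Q commute if and only if PQP and QPQ have the same range. -/
open scoped ComplexOrder

lemma toEL_mul {n : Type*} [Fintype n] [DecidableEq n] (A B : Matrix n n ℂ) :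
    Matrix.toEuclideanLin (A * B) =
      (Matrix.toEuclideanLin A) ∘ₗ (Matrix.toEuclideanLin B) := by
  ext v i
  simp [Matrix.toEuclideanLin_apply, Matrix.mulVec_mulVec]

lemma key_ker {n : Type*} [Fintype n] [DecidableEq n]
    (a b : EuclideanSpace ℂ n →ₗ[ℂ] EuclideanSpace ℂ n)
    (haa : LinearMap.adjoint a = a) (_hai : ∀ x, a (a x) = a x)
    (hbb : LinearMap.adjoint b = b) (hbi : ∀ x, b (b x) = b x) :
    LinearMap.ker (a ∘ₗ b ∘ₗ a) = LinearMap.ker (b ∘ₗ a) := by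
  ext x
  simp only [LinearMap.mem_ker, LinearMap.comp_apply]
  constructor
  · intro hx
    have e1 : (inner ℂ x (a (b (a x))) : ℂ) = inner ℂ (a x) (b (a x)) := by
      nth_rewrite 1 [← haa]
      rw [LinearMap.adjoint_inner_right]
    have e2 : (inner ℂ (a x) (b (a x)) : ℂ) = inner ℂ (b (a x)) (b (a x)) := by
      conv_lhs => rw [← hbi (a x)]
      rw [← LinearMap.adjoint_inner_left, hbb]
    have h0 : (inner ℂ (b (a x)) (b (a x)) : ℂ) = 0 := by
      rw [← e2, ← e1, hx, inner_zero_right]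
    exact inner_self_eq_zero.mp h0
  · intro hx
    rw [hx, map_zero]

/-- Two orthogonal projections P and Q commute iff PQP and QPQ have the same range. -/
theorem proj_commute_iff_supp_eq
    {n : Type*} [Fintype n] [DecidableEq n]
    (P Q : Matrix n n ℂ)
    (hPherm : P.IsHermitian) (hPidem : P * P = P)
    (hQherm : Q.IsHermitian) (hQidem : Q * Q = Q) :
    P * Q = Q * P ↔ msupp (P * Q * P) = msupp (Q * P * Q) := by
  constructor
  · intro h
    have h1 : P * Q * P = Q * P := by rw [h, mul_assoc, hPidem]
    have h2 : Q * P * Q = Q * P := by rw [mul_assoc, h, ← mul_assoc, hQidem]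
    rw [h1, h2]
  · intro h
    set p := Matrix.toEuclideanLin P with hp
    set q := Matrix.toEuclideanLin Q with hq
    have hpa : LinearMap.adjoint p = p := by
      rw [hp, ← Matrix.toEuclideanLin_conjTranspose_eq_adjoint, hPherm]
    have hqa : LinearMap.adjoint q = q := by
      rw [hq, ← Matrix.toEuclideanLin_conjTranspose_eq_adjoint, hQherm]
    have hpp : p ∘ₗ p = p := by rw [hp, ← toEL_mul, hPidem]
    have hqq : q ∘ₗ q = q := by rw [hq, ← toEL_mul, hQidem]
    have hpi : ∀ x, p (p x) = p x := fun x => LinearMap.congr_fun hpp x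
    have hqi : ∀ x, q (q x) = q x := fun x => LinearMap.congr_fun hqq x
    have hPQP : Matrix.toEuclideanLin (P * Q * P) = p ∘ₗ q ∘ₗ p := by
      rw [toEL_mul, toEL_mul, LinearMap.comp_assoc]
    have hQPQ : Matrix.toEuclideanLin (Q * P * Q) = q ∘ₗ p ∘ₗ q := by
      rw [toEL_mul, toEL_mul, LinearMap.comp_assoc]
    have hker : LinearMap.ker (q ∘ₗ p) = LinearMap.ker (p ∘ₗ q) := by
      unfold msupp at h
      rw [hPQP, hQPQ, key_ker p q hpa hpi hqa hqi, key_ker q p hqa hqi hpa hpi] at h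
      have h2 := congrArg Submodule.orthogonal h
      rwa [Submodule.orthogonal_orthogonal, Submodule.orthogonal_orthogonal] at h2
    have main : ∀ x, p (q (p x)) = q (p x) := by
      intro x
      set v := q (p x) with hv
      set w := v - p v with hw
      have hpw : p w = 0 := by
        rw [hw, map_sub, hpi, sub_self]
      have hpqw : p (q w) = 0 := by
        have hwk : w ∈ LinearMap.ker (q ∘ₗ p) := by
          simp [LinearMap.mem_ker, hpw]
        rw [hker] at hwk
        simpa using hwk
      have hqmove : ∀ (u w' : EuclideanSpace ℂ n), (inner ℂ (q u) w' : ℂ) = inner ℂ u (q w') := by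
        intro u w'
        conv_lhs => rw [← hqa]
        rw [LinearMap.adjoint_inner_left]
      have hpmove : ∀ (u w' : EuclideanSpace ℂ n), (inner ℂ (p u) w' : ℂ) = inner ℂ u (p w') := by
        intro u w'
        conv_lhs => rw [← hpa]
        rw [LinearMap.adjoint_inner_left]
      have hvw : (inner ℂ v w : ℂ) = 0 := by
        calc (inner ℂ v w : ℂ) = inner ℂ (q (p x)) w := by rw [hv]
          _ = inner ℂ (p x) (q w) := hqmove _ _
          _ = inner ℂ x (p (q w)) := hpmove _ _
          _ = 0 := by rw [hpqw, inner_zero_right]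
      have hpvw : (inner ℂ (p v) w : ℂ) = 0 := by
        rw [hpmove, hpw, inner_zero_right]
      have hww : (inner ℂ w w : ℂ) = 0 := by
        rw [hw, inner_sub_left, ← hw, hvw, hpvw, sub_zero]
      have hw0 : w = 0 := inner_self_eq_zero.mp hww
      exact (sub_eq_zero.mp (hw ▸ hw0)).symm
    have hmat : P * Q * P = Q * P := by
      apply Matrix.toEuclideanLin.injective
      rw [hPQP, toEL_mul, ← hp, ← hq]
      apply LinearMap.ext
      intro x
      simp only [LinearMap.comp_apply]
      exact main x
    have hfinal : (Q * P).conjTranspose = P * Q := by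
      rw [Matrix.conjTranspose_mul, hPherm, hQherm]
    have h2 : (P * Q * P).conjTranspose = P * Q * P := by
      rw [Matrix.conjTranspose_mul, Matrix.conjTranspose_mul, hPherm, hQherm, ← mul_assoc]
    rw [← hfinal, ← hmat]
    exact h2
end

section
/- For positive semidefinite matrices A and B, there exists a unitary U commuting with the projection Π_A onto supp(A) such that √A·√B·U = √(√A·B·√A) if and only if B commutes with Π_A. -/
open scoped ComplexOrder

open Classical in
/-- The unique positive semidefinite square root of a positive semidefinite matrix
(junk value 0 otherwise). -/
noncomputable def psqrt {n : Type*} [Fintype n] [DecidableEq n] (X : Matrix n n ℂ) :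
    Matrix n n ℂ :=
  if h : X.PosSemidef then
    (h.1.eigenvectorUnitary : Matrix n n ℂ) *
      Matrix.diagonal (((↑) : ℝ → ℂ) ∘ Real.sqrt ∘ h.1.eigenvalues) *
      (star (h.1.eigenvectorUnitary : Matrix n n ℂ))
  else 0

/-- The kernel of a matrix, as a subspace of Euclidean space. -/
noncomputable def mker {n : Type*} [Fintype n] [DecidableEq n] (X : Matrix n n ℂ) :
    Submodule ℂ (EuclideanSpace ℂ n) :=
  LinearMap.ker (Matrix.toEuclideanLin X)

/-- The generalized geometric mean M(A,B) = √A · √(√(A⁺) B √(A⁺)) · √A, where Ap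
stands for the Moore–Penrose pseudoinverse A⁺ of A. -/
noncomputable def geoMean {n : Type*} [Fintype n] [DecidableEq n]
    (A Ap B : Matrix n n ℂ) : Matrix n n ℂ :=
  psqrt A * psqrt (psqrt Ap * B * psqrt Ap) * psqrt A

open scoped Matrix InnerProductSpace
set_option linter.unusedSectionVars false
open scoped MatrixOrder

section AuxLemmas
variable {n : Type*} [Fintype n] [DecidableEq n]

lemma psqrt_eq_cfcSqrt {X : Matrix n n ℂ} (hX : X.PosSemidef) : psqrt X = CFC.sqrt X := by
  rw [psqrt, dif_pos hX, CFC.sqrt_eq_cfc, cfc_nnreal_eq_real _ X, hX.1.cfc_eq]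
  simp only [Matrix.IsHermitian.cfc, Unitary.conjStarAlgAut_apply]
  congr 3
  funext i
  simp [Real.coe_sqrt, Real.coe_toNNReal', max_eq_left (hX.eigenvalues_nonneg i)]

lemma psqrt_posSemidef {X : Matrix n n ℂ} (hX : X.PosSemidef) : (psqrt X).PosSemidef := by
  rw [psqrt_eq_cfcSqrt hX]; exact Matrix.nonneg_iff_posSemidef.mp (CFC.sqrt_nonneg X)

lemma psqrt_mul_self {X : Matrix n n ℂ} (hX : X.PosSemidef) : psqrt X * psqrt X = X := by
  rw [psqrt_eq_cfcSqrt hX]; exact CFC.sqrt_mul_sqrt_self X hX.nonneg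

lemma psqrt_herm {X : Matrix n n ℂ} (hX : X.PosSemidef) : (psqrt X)ᴴ = psqrt X :=
  (psqrt_posSemidef hX).isHermitian

lemma psqrt_eq {X Y : Matrix n n ℂ} (hY : Y.PosSemidef) (h : Y * Y = X) : psqrt X = Y := by
  have hX : X.PosSemidef := h ▸ (by simpa [← h, hY.isHermitian.eq] using
    Matrix.posSemidef_conjTranspose_mul_self Y)
  rw [psqrt_eq_cfcSqrt hX]
  exact CFC.sqrt_unique h hY.nonneg

-- bridge: multiplication to composition
lemma tel_mul (M N : Matrix n n ℂ) :
    Matrix.toEuclideanLin (M * N) =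
      (Matrix.toEuclideanLin M).comp (Matrix.toEuclideanLin N) := by
  ext x
  simp [Matrix.toEuclideanLin_apply, Matrix.mulVec_mulVec]

lemma herm_range_eq {M : Matrix n n ℂ} (hM : M.IsHermitian) :
    LinearMap.range (Matrix.toEuclideanLin M) = (LinearMap.ker (Matrix.toEuclideanLin M))ᗮ := by
  have hsymm : (Matrix.toEuclideanLin M).IsSymmetric :=
    (Matrix.isHermitian_iff_isSymmetric).mp hM
  apply Submodule.eq_of_le_of_finrank_eq
  · rintro _ ⟨x, rfl⟩
    rw [Submodule.mem_orthogonal]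
    intro y hy
    rw [← hsymm y x, LinearMap.mem_ker.mp hy, inner_zero_left]
  · have h1 := LinearMap.finrank_range_add_finrank_ker (Matrix.toEuclideanLin (𝕜 := ℂ) M)
    have h2 := Submodule.finrank_add_finrank_orthogonal
      (K := LinearMap.ker (Matrix.toEuclideanLin (𝕜 := ℂ) M))
    omega

lemma psd_vec_cancel {S : Matrix n n ℂ} (hS : S.IsHermitian) {x : n → ℂ}
    (h : S *ᵥ (S *ᵥ x) = 0) : S *ᵥ x = 0 := by
  have h0 : dotProduct (star (S *ᵥ x)) (S *ᵥ x) = 0 := by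
    rw [Matrix.star_mulVec, ← Matrix.dotProduct_mulVec, hS.eq, h, dotProduct_zero]
  exact dotProduct_star_self_eq_zero.mp h0

lemma psd_mul_cancel {S M : Matrix n n ℂ} (hS : S.IsHermitian) (h : S * (S * M) = 0) :
    S * M = 0 := by
  have h2 : (S * M)ᴴ * (S * M) = 0 := by
    rw [Matrix.conjTranspose_mul, hS.eq, mul_assoc Mᴴ S (S*M), h, mul_zero]
  exact Matrix.conjTranspose_mul_self_eq_zero.mp h2

lemma tel_one : Matrix.toEuclideanLin (1 : Matrix n n ℂ) = LinearMap.id := by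
  ext x
  simp [Matrix.toEuclideanLin_apply]

/-- If `‖r x‖ = ‖g x‖` for all `x`, there is a linear isometry `V` with `V ∘ r = g`. -/
lemma exists_isometry_comp {E : Type*} [NormedAddCommGroup E] [InnerProductSpace ℂ E]
    [FiniteDimensional ℂ E] (r g : E →ₗ[ℂ] E) (hnorm : ∀ x, ‖r x‖ = ‖g x‖) :
    ∃ V : E →ₗᵢ[ℂ] E, ∀ x, V (r x) = g x := by
  have hker : ∀ x, r x = 0 → g x = 0 := fun x h => by
    have h2 := hnorm x
    rw [h, norm_zero] at h2
    exact norm_eq_zero.mp h2.symm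
  set p : Submodule ℂ E := (LinearMap.ker r)ᗮ with hp
  set r' : p →ₗ[ℂ] E := r ∘ₗ p.subtype with hr'
  have hinj : Function.Injective r' := by
    rw [← LinearMap.ker_eq_bot, Submodule.eq_bot_iff]
    rintro ⟨x, hxp⟩ hx
    have hxk : x ∈ LinearMap.ker r := by
      simpa [hr', LinearMap.mem_ker] using hx
    have h3 : x ∈ LinearMap.ker r ⊓ (LinearMap.ker r)ᗮ := ⟨hxk, hxp⟩
    rw [Submodule.inf_orthogonal_eq_bot] at h3
    simpa using h3
  set e := LinearEquiv.ofInjective r' hinj with he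
  have hLnorm : ∀ y : LinearMap.range r',
      ‖(g ∘ₗ (p.subtype ∘ₗ (e.symm : LinearMap.range r' →ₗ[ℂ] p))) y‖ = ‖y‖ := by
    rintro y
    have h1 : r' (e.symm y) = (y : E) := by
      rw [he]; exact LinearEquiv.ofInjective_symm_apply r' y
    calc ‖(g ∘ₗ (p.subtype ∘ₗ (e.symm : LinearMap.range r' →ₗ[ℂ] p))) y‖
        = ‖g ((p.subtype) (e.symm y))‖ := rfl
      _ = ‖r ((p.subtype) (e.symm y))‖ := (hnorm _).symm
      _ = ‖r' (e.symm y)‖ := rfl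
      _ = ‖(y : E)‖ := by rw [h1]
  refine ⟨(⟨g ∘ₗ (p.subtype ∘ₗ (e.symm : LinearMap.range r' →ₗ[ℂ] p)), hLnorm⟩ :
      LinearMap.range r' →ₗᵢ[ℂ] E).extend, ?_⟩
  intro x
  obtain ⟨a, ha, b, hb, rfl⟩ := (LinearMap.ker r).exists_add_mem_mem_orthogonal x
  have hra : r a = 0 := LinearMap.mem_ker.mp ha
  have hga : g a = 0 := hker a hra
  have hrab : r (a + b) = r' ⟨b, hb⟩ := by
    simp [hr', map_add, hra]
  have hmem : r (a + b) ∈ LinearMap.range r' := by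
    rw [hrab]; exact LinearMap.mem_range_self r' ⟨b, hb⟩
  have hext := LinearIsometry.extend_apply (⟨g ∘ₗ (p.subtype ∘ₗ
      (e.symm : LinearMap.range r' →ₗ[ℂ] p)), hLnorm⟩ :
      LinearMap.range r' →ₗᵢ[ℂ] E) ⟨r (a + b), hmem⟩
  rw [hext]
  have hsub : (⟨r (a + b), hmem⟩ : LinearMap.range r') = e ⟨b, hb⟩ := by
    apply Subtype.ext
    rw [he, LinearEquiv.ofInjective_apply]
    exact hrab
  rw [hsub]
  show g ((p.subtype) (e.symm (e ⟨b, hb⟩))) = g (a + b)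
  rw [LinearEquiv.symm_apply_apply]
  show g b = g (a + b)
  rw [map_add, hga, zero_add]

set_option maxHeartbeats 1000000 in
lemma exists_unitary_polar (X : Matrix n n ℂ) :
    ∃ V ∈ Matrix.unitaryGroup n ℂ, psqrt (X * Xᴴ) * V = X := by
  have hXX : (X * Xᴴ).PosSemidef := Matrix.posSemidef_self_mul_conjTranspose X
  have hR : (psqrt (X * Xᴴ)).PosSemidef := psqrt_posSemidef hXX
  have hR2 : psqrt (X * Xᴴ) * psqrt (X * Xᴴ) = X * Xᴴ := psqrt_mul_self hXX
  set R := psqrt (X * Xᴴ) with hRdef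
  set r := Matrix.toEuclideanLin R with hr
  set g := Matrix.toEuclideanLin Xᴴ with hg
  have hrsymm : r.IsSymmetric := (Matrix.isHermitian_iff_isSymmetric).mp hR.isHermitian
  have hadj : g = LinearMap.adjoint (Matrix.toEuclideanLin X) :=
    Matrix.toEuclideanLin_conjTranspose_eq_adjoint X
  have hnorm : ∀ x, ‖r x‖ = ‖g x‖ := by
    intro x
    have h1 : (⟪r x, r x⟫_ℂ) = ⟪g x, g x⟫_ℂ := by
      have e1 : ⟪r x, r x⟫_ℂ = ⟪x, r (r x)⟫_ℂ := hrsymm x (r x)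
      have e2 : r (r x) = Matrix.toEuclideanLin X (g x) := by
        have h3 : (Matrix.toEuclideanLin (R * R)) x
            = (Matrix.toEuclideanLin (X * Xᴴ)) x := by rw [hR2]
        rw [tel_mul, tel_mul] at h3
        exact h3
      rw [e1, e2, hadj]
      exact (LinearMap.adjoint_inner_left _ _ _).symm
    rw [@norm_eq_sqrt_re_inner ℂ, @norm_eq_sqrt_re_inner ℂ, h1]
  obtain ⟨V₀, hkey⟩ := exists_isometry_comp r g hnorm
  set M : Matrix n n ℂ := Matrix.toEuclideanLin.symm V₀.toLinearMap with hM
  have hMtel : Matrix.toEuclideanLin M = V₀.toLinearMap := Matrix.toEuclideanLin.apply_symm_apply _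
  have hMR : M * R = Xᴴ := by
    apply Matrix.toEuclideanLin.injective
    rw [tel_mul, hMtel]
    exact LinearMap.ext hkey
  have hMunit : M ∈ Matrix.unitaryGroup n ℂ := by
    rw [Matrix.mem_unitaryGroup_iff']
    have h1 : Matrix.toEuclideanLin (star M * M) = LinearMap.id := by
      rw [Matrix.star_eq_conjTranspose, tel_mul, Matrix.toEuclideanLin_conjTranspose_eq_adjoint,
        hMtel]
      refine LinearMap.ext fun x => ?_
      apply ext_inner_right ℂ
      intro y
      simp only [LinearMap.coe_comp, Function.comp_apply, LinearMap.id_coe, id_eq]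
      rw [LinearMap.adjoint_inner_left]
      exact V₀.inner_map_map x y
    have h2 := congrArg Matrix.toEuclideanLin.symm h1
    rwa [Matrix.toEuclideanLin.symm_apply_apply, ← tel_one,
      Matrix.toEuclideanLin.symm_apply_apply] at h2
  refine ⟨Mᴴ, ?_, ?_⟩
  · rw [← Matrix.star_eq_conjTranspose]
    exact Unitary.star_mem hMunit
  · have h4 := congrArg Matrix.conjTranspose hMR
    rwa [Matrix.conjTranspose_mul, hR.isHermitian.eq, Matrix.conjTranspose_conjTranspose] at h4

lemma exists_unitary_of_eq (X Y : Matrix n n ℂ) (h : X * Xᴴ = Y * Yᴴ) :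
    ∃ U ∈ Matrix.unitaryGroup n ℂ, X * U = Y := by
  obtain ⟨V, hV, hVX⟩ := exists_unitary_polar X
  obtain ⟨W, hW, hWY⟩ := exists_unitary_polar Y
  refine ⟨star V * W, mul_mem (Unitary.star_mem hV) hW, ?_⟩
  have hVV : V * star V = 1 := Matrix.mem_unitaryGroup_iff.mp hV
  calc X * (star V * W) = psqrt (X * Xᴴ) * V * (star V * W) := by rw [hVX]
    _ = psqrt (X * Xᴴ) * (V * star V) * W := by simp only [mul_assoc]
    _ = psqrt (Y * Yᴴ) * W := by rw [hVV, mul_one, h]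
    _ = Y := hWY

lemma psqrt_comm_proj {B P : Matrix n n ℂ} (hB : B.PosSemidef) (hP : P.IsHermitian)
    (hidem : P * P = P) (hcomm : B * P = P * B) : psqrt B * P = P * psqrt B := by
  set W : Matrix n n ℂ := P + P - 1 with hW
  have hW2 : W * W = 1 := by
    simp only [hW, sub_mul, mul_sub, add_mul, mul_add, mul_one, one_mul, hidem]
    abel
  have hWh : Wᴴ = W := by
    simp [hW, hP.eq]
  have hWB : W * B = B * W := by
    simp only [hW, sub_mul, mul_sub, add_mul, mul_add, mul_one, one_mul, hcomm]
  have hsq : (W * psqrt B * W) * (W * psqrt B * W) = B := by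
    calc (W * psqrt B * W) * (W * psqrt B * W)
        = W * psqrt B * (W * W) * psqrt B * W := by simp only [mul_assoc]
      _ = W * (psqrt B * psqrt B) * W := by rw [hW2]; simp only [mul_assoc, one_mul]
      _ = W * B * W := by rw [psqrt_mul_self hB]
      _ = B * (W * W) := by rw [hWB, mul_assoc]
      _ = B := by rw [hW2, mul_one]
  have hpsd : (W * psqrt B * W).PosSemidef := by
    have := (psqrt_posSemidef hB).conjTranspose_mul_mul_same W
    rwa [hWh] at this
  have heq : psqrt B = W * psqrt B * W := psqrt_eq hpsd hsq
  have h2 : W * psqrt B = psqrt B * W := by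
    calc W * psqrt B = W * (W * psqrt B * W) := by rw [← heq]
      _ = (W * W) * psqrt B * W := by simp only [mul_assoc]
      _ = psqrt B * W := by rw [hW2, one_mul]
  -- now extract the P commutation
  have h3 : psqrt B * P + psqrt B * P = P * psqrt B + P * psqrt B := by
    have := h2
    simp only [hW, sub_mul, mul_sub, add_mul, mul_add, mul_one, one_mul] at this
    have h4 := congrArg (· + psqrt B) this
    simp only [sub_add_cancel] at h4
    linear_combination (norm := abel) h4.symm
  have h5 : (2 : ℂ) • (psqrt B * P) = (2 : ℂ) • (P * psqrt B) := by
    rw [two_smul, two_smul]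
    exact h3
  exact smul_right_injective _ (two_ne_zero) h5

lemma pi_facts {A PiA : Matrix n n ℂ} (hA : A.PosSemidef) (hherm : PiA.IsHermitian)
    (hidem : PiA * PiA = PiA)
    (hrange : LinearMap.range (Matrix.toEuclideanLin PiA) =
      (LinearMap.ker (Matrix.toEuclideanLin A))ᗮ) :
    PiA * psqrt A = psqrt A ∧ ∀ M : Matrix n n ℂ, psqrt A * M = 0 → PiA * M = 0 := by
  have hsAp : (psqrt A).PosSemidef := psqrt_posSemidef hA
  have hsA2 : psqrt A * psqrt A = A := psqrt_mul_self hA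
  have hsymmA : (Matrix.toEuclideanLin (psqrt A)).IsSymmetric :=
    (Matrix.isHermitian_iff_isSymmetric).mp hsAp.isHermitian
  have hsymmP : (Matrix.toEuclideanLin PiA).IsSymmetric :=
    (Matrix.isHermitian_iff_isSymmetric).mp hherm
  have hcompA : ∀ x, Matrix.toEuclideanLin (psqrt A) (Matrix.toEuclideanLin (psqrt A) x)
      = Matrix.toEuclideanLin A x := by
    intro x
    have h := congrArg Matrix.toEuclideanLin hsA2
    rw [tel_mul] at h
    exact DFunLike.congr_fun h x
  have hidem2 : ∀ x, Matrix.toEuclideanLin PiA (Matrix.toEuclideanLin PiA x)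
      = Matrix.toEuclideanLin PiA x := by
    intro x
    have h := congrArg Matrix.toEuclideanLin hidem
    rw [tel_mul] at h
    exact DFunLike.congr_fun h x
  have hkerAA : LinearMap.ker (Matrix.toEuclideanLin (psqrt A))
      = LinearMap.ker (Matrix.toEuclideanLin A) := by
    ext x
    simp only [LinearMap.mem_ker]
    constructor
    · intro h
      rw [← hcompA, h, map_zero]
    · intro h
      have h1 : (⟪Matrix.toEuclideanLin (psqrt A) x, Matrix.toEuclideanLin (psqrt A) x⟫_ℂ) = 0 := by
        rw [hsymmA x, hcompA, h, inner_zero_right]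
      exact inner_self_eq_zero.mp h1
  have hranges : LinearMap.range (Matrix.toEuclideanLin (psqrt A))
      = LinearMap.range (Matrix.toEuclideanLin PiA) := by
    rw [herm_range_eq hsAp.isHermitian, hkerAA, ← hrange]
  constructor
  · apply Matrix.toEuclideanLin.injective
    rw [tel_mul]
    refine LinearMap.ext fun x => ?_
    have hmem : Matrix.toEuclideanLin (psqrt A) x
        ∈ LinearMap.range (Matrix.toEuclideanLin PiA) := by
      rw [← hranges]; exact LinearMap.mem_range_self _ x
    obtain ⟨y, hy⟩ := hmem
    show Matrix.toEuclideanLin PiA (Matrix.toEuclideanLin (psqrt A) x)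
      = Matrix.toEuclideanLin (psqrt A) x
    rw [← hy, hidem2]
  · intro M h
    apply Matrix.toEuclideanLin.injective
    rw [tel_mul, map_zero]
    refine LinearMap.ext fun x => ?_
    have h1 : Matrix.toEuclideanLin (psqrt A) (Matrix.toEuclideanLin M x) = 0 := by
      have h2 := congrArg Matrix.toEuclideanLin h
      rw [tel_mul, map_zero] at h2
      exact DFunLike.congr_fun h2 x
    have hmem : Matrix.toEuclideanLin M x
        ∈ (LinearMap.range (Matrix.toEuclideanLin PiA))ᗮ := by
      rw [hrange, Submodule.orthogonal_orthogonal, ← hkerAA]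
      exact LinearMap.mem_ker.mpr h1
    show Matrix.toEuclideanLin PiA (Matrix.toEuclideanLin M x) = 0
    set y := Matrix.toEuclideanLin M x
    have h3 : (⟪Matrix.toEuclideanLin PiA y, Matrix.toEuclideanLin PiA y⟫_ℂ) = 0 := by
      rw [hsymmP y (Matrix.toEuclideanLin PiA y), hidem2]
      exact (Submodule.mem_orthogonal' _ _).mp hmem _ (LinearMap.mem_range_self _ y)
    exact inner_self_eq_zero.mp h3

end AuxLemmas

/-- There is a unitary U commuting with the support projection of A such that
√A √B U = √(√A B √A) iff B commutes with the support projection of A. -/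
theorem exists_unitary_commuting_polar_iff
    {n : Type*} [Fintype n] [DecidableEq n]
    (A B PiA : Matrix n n ℂ) (hA : A.PosSemidef) (hB : B.PosSemidef)
    (hherm : PiA.IsHermitian) (hidem : PiA * PiA = PiA)
    (hrange : LinearMap.range (Matrix.toEuclideanLin PiA) = msupp A) :
    (∃ U : Matrix n n ℂ, U ∈ Matrix.unitaryGroup n ℂ ∧ U * PiA = PiA * U ∧
      psqrt A * psqrt B * U = psqrt (psqrt A * B * psqrt A)) ↔ B * PiA = PiA * B := by
  have hrange' : LinearMap.range (Matrix.toEuclideanLin PiA) =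
      (LinearMap.ker (Matrix.toEuclideanLin A))ᗮ := hrange
  obtain ⟨hPisA, hcancel⟩ := pi_facts hA hherm hidem hrange'
  have hsAh : (psqrt A)ᴴ = psqrt A := psqrt_herm hA
  have hsBh : (psqrt B)ᴴ = psqrt B := psqrt_herm hB
  have hsAPi : psqrt A * PiA = psqrt A := by
    have h0 := congrArg Matrix.conjTranspose hPisA
    rwa [Matrix.conjTranspose_mul, hsAh, hherm.eq] at h0
  have hsA2 : psqrt A * psqrt A = A := psqrt_mul_self hA
  have hsB2 : psqrt B * psqrt B = B := psqrt_mul_self hB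
  have hT : psqrt A * B * psqrt A = (psqrt A * psqrt B) * (psqrt A * psqrt B)ᴴ := by
    rw [Matrix.conjTranspose_mul, hsAh, hsBh]
    conv_lhs => rw [← hsB2]
    simp only [mul_assoc]
  have hSBS : (psqrt A * B * psqrt A).PosSemidef := by
    rw [hT]; exact Matrix.posSemidef_self_mul_conjTranspose _
  have hSp : (psqrt (psqrt A * B * psqrt A)).PosSemidef := psqrt_posSemidef hSBS
  have hS2 : psqrt (psqrt A * B * psqrt A) * psqrt (psqrt A * B * psqrt A)
      = psqrt A * B * psqrt A := psqrt_mul_self hSBS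
  set S := psqrt (psqrt A * B * psqrt A) with hSdef
  constructor
  · rintro ⟨U, hU, hUPi, hUeq⟩
    have hUU : U * star U = 1 := Matrix.mem_unitaryGroup_iff.mp hU
    have hPiS : PiA * S = S := by
      rw [← hUeq]
      calc PiA * (psqrt A * psqrt B * U) = (PiA * psqrt A) * psqrt B * U := by
            simp only [mul_assoc]
        _ = psqrt A * psqrt B * U := by rw [hPisA]
    have hSPi : S * PiA = S := by
      have h0 := congrArg Matrix.conjTranspose hPiS
      rwa [Matrix.conjTranspose_mul, hSp.isHermitian.eq, hherm.eq] at h0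
    have h1 : psqrt A * psqrt B * U * PiA = psqrt A * psqrt B * U := by rw [hUeq]; exact hSPi
    have h3 : psqrt A * psqrt B * (PiA * U) = psqrt A * psqrt B * U := by
      rw [← hUPi, ← mul_assoc]; exact h1
    have h4 := congrArg (· * star U) h3
    simp only [mul_assoc] at h4
    rw [hUU, mul_one, mul_one] at h4
    -- h4 : psqrt A * (psqrt B * PiA) = psqrt A * psqrt B
    have h5 : psqrt A * (psqrt B * PiA - psqrt B) = 0 := by
      rw [mul_sub, h4, sub_self]
    have h6 := hcancel _ h5
    rw [mul_sub, sub_eq_zero] at h6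
    -- h6 : PiA * (psqrt B * PiA) = PiA * psqrt B
    have h8 : psqrt B * PiA = PiA * psqrt B := by
      have h9 := congrArg Matrix.conjTranspose h6
      simp only [Matrix.conjTranspose_mul, hsBh, hherm.eq] at h9
      -- h9 : (PiA * psqrt B) * PiA = psqrt B * PiA  (up to assoc)
      rw [← h9, mul_assoc]
      exact h6
    calc B * PiA = psqrt B * (psqrt B * PiA) := by
          conv_lhs => rw [← hsB2]
          rw [mul_assoc]
      _ = psqrt B * (PiA * psqrt B) := by rw [h8]
      _ = (psqrt B * PiA) * psqrt B := by rw [mul_assoc]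
      _ = (PiA * psqrt B) * psqrt B := by rw [h8]
      _ = PiA * B := by rw [mul_assoc, hsB2]
  · intro hBPi
    have hsBPi : psqrt B * PiA = PiA * psqrt B := psqrt_comm_proj hB hherm hidem hBPi
    set T := psqrt A * psqrt B with hTdef
    have hTPi : T * PiA = T := by
      rw [hTdef, mul_assoc, hsBPi, ← mul_assoc, hsAPi]
    have hPiT : PiA * T = T := by rw [hTdef, ← mul_assoc, hPisA]
    have hThPi : Tᴴ * PiA = Tᴴ := by
      have h0 := congrArg Matrix.conjTranspose hPiT
      rwa [Matrix.conjTranspose_mul, hherm.eq] at h0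
    have hS2' : S * S = T * Tᴴ := by rw [hS2, hT]
    have hSSPi : S * S * PiA = S * S := by
      rw [hS2', mul_assoc, hThPi]
    have hSPi : S * PiA = S := by
      have h1 : S * (S * (PiA - 1)) = 0 := by
        rw [mul_sub, mul_one, mul_sub, ← mul_assoc, hSSPi, sub_self]
      have h2 := psd_mul_cancel hSp.isHermitian h1
      rw [mul_sub, mul_one, sub_eq_zero] at h2
      exact h2
    have hPiS : PiA * S = S := by
      have h0 := congrArg Matrix.conjTranspose hSPi
      rwa [Matrix.conjTranspose_mul, hSp.isHermitian.eq, hherm.eq] at h0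
    set P : Matrix n n ℂ := 1 - PiA with hP
    have hPidem : P * P = P := by
      simp only [hP, mul_sub, sub_mul, mul_one, one_mul, hidem]
      abel
    have hPh : Pᴴ = P := by simp [hP, hherm.eq]
    have hTP : T * P = 0 := by rw [hP, mul_sub, mul_one, hTPi, sub_self]
    have hPT : P * T = 0 := by rw [hP, sub_mul, one_mul, hPiT, sub_self]
    have hSP : S * P = 0 := by rw [hP, mul_sub, mul_one, hSPi, sub_self]
    have hPS : P * S = 0 := by rw [hP, sub_mul, one_mul, hPiS, sub_self]
    have hPTh : P * Tᴴ = 0 := by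
      have h0 := congrArg Matrix.conjTranspose hTP
      rwa [Matrix.conjTranspose_mul, hPh, Matrix.conjTranspose_zero] at h0
    have heq : (T + P) * (T + P)ᴴ = (S + P) * (S + P)ᴴ := by
      rw [Matrix.conjTranspose_add, hPh, Matrix.conjTranspose_add, hPh, hSp.isHermitian.eq]
      rw [add_mul, mul_add, mul_add, add_mul, mul_add, mul_add]
      rw [hTP, hPTh, hPidem, hSP, hPS, hS2']
    obtain ⟨U, hU, hXU⟩ := exists_unitary_of_eq (T + P) (S + P) heq
    have hPU : P * U = P := by
      have h1 : P * ((T + P) * U) = P * (S + P) := by rw [hXU]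
      rw [← mul_assoc, mul_add, hPT, zero_add, hPidem, mul_add, hPS, zero_add, hPidem] at h1
      exact h1
    have hUP : U * P = P := by
      have h2 := congrArg Matrix.conjTranspose hPU
      rw [Matrix.conjTranspose_mul, hPh] at h2
      -- h2 : Uᴴ * P = P
      have h3 : U * (Uᴴ * P) = U * P := by rw [h2]
      have hUU : U * star U = 1 := Matrix.mem_unitaryGroup_iff.mp hU
      rw [← mul_assoc, ← Matrix.star_eq_conjTranspose, hUU, one_mul] at h3
      exact h3.symm
    refine ⟨U, hU, ?_, ?_⟩
    · have e1 := hUP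
      rw [hP, mul_sub, mul_one] at e1
      have e2 := hPU
      rw [hP, sub_mul, one_mul] at e2
      have e3 : U - U * PiA = U - PiA * U := e1.trans e2.symm
      rw [← sub_sub_cancel U (U * PiA), e3, sub_sub_cancel]
    · show T * U = S
      have h4 : (T + P) * U = S + P := hXU
      rw [add_mul, hPU] at h4
      exact add_right_cancel h4
end

section
/- The classical fidelity is monotone under coarse graining: if p, q, p', q' are finitely supported probability distributions with p_j = Σ_k S_{jk} p'_k and q_j = Σ_k S_{jk} q'_k for a stochastic matrix S (S_{jk} ≥ 0, Σ_j S_{jk} = 1), then (Σ_j √(p_j q_j))² ≥ (Σ_k √(p'_k q'_k))². -/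
/-- The classical fidelity is monotone under coarse graining by a stochastic matrix. -/
theorem classical_fidelity_coarse_graining
    {J K : Type*} [Fintype J] [Fintype K]
    (p q : J → ℝ) (p' q' : K → ℝ) (S : J → K → ℝ)
    (hp' : ∀ k, 0 ≤ p' k) (hq' : ∀ k, 0 ≤ q' k)
    (hp'sum : ∑ k, p' k = 1) (hq'sum : ∑ k, q' k = 1)
    (hS : ∀ j k, 0 ≤ S j k) (hScol : ∀ k, ∑ j, S j k = 1)
    (hp : ∀ j, p j = ∑ k, S j k * p' k) (hq : ∀ j, q j = ∑ k, S j k * q' k) :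
    (∑ k, Real.sqrt (p' k * q' k)) ^ 2 ≤ (∑ j, Real.sqrt (p j * q j)) ^ 2 := by
  have key : ∑ k, Real.sqrt (p' k * q' k) ≤ ∑ j, Real.sqrt (p j * q j) := by
    have step : ∀ j, ∑ k, S j k * Real.sqrt (p' k * q' k) ≤ Real.sqrt (p j * q j) := by
      intro j
      have h := Real.sum_sqrt_mul_sqrt_le Finset.univ
        (f := fun k => S j k * p' k) (g := fun k => S j k * q' k)
        (fun k => mul_nonneg (hS j k) (hp' k)) (fun k => mul_nonneg (hS j k) (hq' k))
      calc ∑ k, S j k * Real.sqrt (p' k * q' k)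
          = ∑ k, Real.sqrt (S j k * p' k) * Real.sqrt (S j k * q' k) := by
            refine Finset.sum_congr rfl fun k _ => ?_
            rw [Real.sqrt_mul (hS j k), Real.sqrt_mul (hS j k), Real.sqrt_mul (hp' k),
              mul_mul_mul_comm, Real.mul_self_sqrt (hS j k)]
        _ ≤ Real.sqrt (∑ k, S j k * p' k) * Real.sqrt (∑ k, S j k * q' k) := h
        _ = Real.sqrt (p j * q j) := by
            rw [hp j, hq j, ← Real.sqrt_mul (Finset.sum_nonneg fun k _ =>
              mul_nonneg (hS j k) (hp' k))]
    calc ∑ k, Real.sqrt (p' k * q' k)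
        = ∑ j, ∑ k, S j k * Real.sqrt (p' k * q' k) := by
          rw [Finset.sum_comm]
          refine Finset.sum_congr rfl fun k _ => ?_
          rw [← Finset.sum_mul, hScol k, one_mul]
      _ ≤ ∑ j, Real.sqrt (p j * q j) := Finset.sum_le_sum fun j _ => step j
  have h1 : (0:ℝ) ≤ ∑ k, Real.sqrt (p' k * q' k) :=
    Finset.sum_nonneg fun k _ => Real.sqrt_nonneg _
  exact pow_le_pow_left₀ h1 key 2
end
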